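/- Fix θ ∈ (0, π/2) and define q₀ : ℝ → ℂ by q₀(x) := √(2 sin(2θ)) · (cos θ · cosh x − i sin θ · sinh x)³ / (cos²θ · cosh²x + sin²θ · sinh²x)² · e^{−i x · cot(2θ)}. Then ∫_ℝ |q₀(x)|² dx = 8θ. Equivalently, ∫_ℝ 2 sin(2θ) / (cos²θ · cosh²x + sin²θ · sinh²x) dx = 8θ. -/

import Mathlib

open MeasureTheory

private lemma real_integral_aux (θ : ℝ) (hθ : θ ∈ Set.Ioo 0 (Real.pi / 2)) :
    (∫ x : ℝ,
        2 * Real.sin (2 * θ)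
          / (Real.cos θ ^ 2 * Real.cosh x ^ 2 + Real.sin θ ^ 2 * Real.sinh x ^ 2)) = 8 * θ := by
  obtain ⟨hθ0, hθ2⟩ := hθ
  have hpi := Real.pi_pos
  have hc : 0 < Real.cos θ := Real.cos_pos_of_mem_Ioo ⟨by linarith, hθ2⟩
  have hs : 0 < Real.sin θ := Real.sin_pos_of_pos_of_lt_pi hθ0 (by linarith)
  set g : ℝ → ℝ := fun x =>
    2 * Real.sin (2 * θ) / (Real.cos θ ^ 2 * Real.cosh x ^ 2 + Real.sin θ ^ 2 * Real.sinh x ^ 2)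
    with hg
  have hd : ∀ x : ℝ, 0 < Real.cos θ ^ 2 * Real.cosh x ^ 2 + Real.sin θ ^ 2 * Real.sinh x ^ 2 := by
    intro x
    nlinarith [mul_pos (pow_pos hc 2) (pow_pos (Real.cosh_pos x) 2),
      sq_nonneg (Real.sin θ * Real.sinh x)]
  set F : ℝ → ℝ := fun x => 4 * Real.arctan (Real.tan θ * (Real.sinh x / Real.cosh x)) with hFdef
  have hF : ∀ x : ℝ, HasDerivAt F (g x) x := by
    intro x
    have hcx := Real.cosh_pos x
    have hT : HasDerivAt (fun x => Real.sinh x / Real.cosh x) (1 / Real.cosh x ^ 2) x := by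
      have h := (Real.hasDerivAt_sinh x).div (Real.hasDerivAt_cosh x) hcx.ne'
      refine h.congr_deriv ?_
      have h1 := Real.cosh_sq_sub_sinh_sq x
      rw [show Real.cosh x * Real.cosh x - Real.sinh x * Real.sinh x = 1 by nlinarith]
    have h2 := ((Real.hasDerivAt_arctan (Real.tan θ * (Real.sinh x / Real.cosh x))).comp x
      (hT.const_mul (Real.tan θ))).const_mul 4
    refine HasDerivAt.congr_deriv h2 ?_
    rw [hg]
    have h1 := Real.cosh_sq_sub_sinh_sq x
    rw [Real.sin_two_mul, Real.tan_eq_sin_div_cos]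
    have hne : (1 : ℝ) + (Real.sin θ / Real.cos θ * (Real.sinh x / Real.cosh x)) ^ 2 ≠ 0 := by
      positivity
    field_simp
    ring
  have hT1 : Filter.Tendsto (fun x => Real.sinh x / Real.cosh x) Filter.atTop (nhds 1) := by
    have he0 : Filter.Tendsto (fun x : ℝ => Real.exp (-x)) Filter.atTop (nhds 0) :=
      Real.tendsto_exp_atBot.comp Filter.tendsto_neg_atTop_atBot
    have he : Filter.Tendsto (fun x : ℝ => Real.exp (-x) ^ 2) Filter.atTop (nhds 0) := by
      simpa using he0.pow 2
    have heq : ∀ x : ℝ, Real.sinh x / Real.cosh x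
        = (1 - Real.exp (-x) ^ 2) / (1 + Real.exp (-x) ^ 2) := by
      intro x
      rw [Real.sinh_eq, Real.cosh_eq]
      have h1 : Real.exp (-x) * Real.exp x = 1 := by
        rw [← Real.exp_add]; simp
      have h2 := Real.exp_pos x
      have h4 : (0:ℝ) < 1 + Real.exp (-x) ^ 2 := by positivity
      field_simp
      ring_nf
      nlinarith [h1, Real.exp_pos (-x)]
    simp_rw [heq]
    have hlim : Filter.Tendsto (fun x : ℝ => (1 - Real.exp (-x) ^ 2) / (1 + Real.exp (-x) ^ 2))
        Filter.atTop (nhds ((1 - 0) / (1 + 0))) :=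
      (tendsto_const_nhds.sub he).div (tendsto_const_nhds.add he) (by norm_num)
    simpa using hlim
  have hFlim : Filter.Tendsto F Filter.atTop (nhds (4 * θ)) := by
    have : Filter.Tendsto F Filter.atTop
        (nhds (4 * Real.arctan (Real.tan θ * 1))) :=
      (((Real.continuous_arctan.tendsto _).comp (tendsto_const_nhds.mul hT1)).const_mul 4)
    simpa [Real.arctan_tan (by linarith : -(Real.pi/2) < θ) hθ2] using this
  have hgnn : ∀ x : ℝ, 0 ≤ g x := by
    intro x
    apply div_nonneg _ (hd x).le
    have : 0 < Real.sin (2 * θ) := Real.sin_pos_of_pos_of_lt_pi (by linarith) (by linarith)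
    linarith
  have hIoi : ∫ x in Set.Ioi (0:ℝ), g x = 4 * θ - F 0 :=
    integral_Ioi_of_hasDerivAt_of_nonneg' (fun x _ => hF x) (fun x _ => hgnn x) hFlim
  have hF0 : F 0 = 0 := by simp [hFdef]
  have heven : ∀ x : ℝ, g |x| = g x := by
    intro x
    have h1 : Real.cosh |x| = Real.cosh x := Real.cosh_abs x
    have h2 : Real.sinh |x| ^ 2 = Real.sinh x ^ 2 := by
      rcases abs_choice x with h | h <;> rw [h] <;> simp [Real.sinh_neg]
    simp only [hg, h1, h2]
  calc (∫ x : ℝ, g x) = ∫ x : ℝ, g |x| := by simp_rw [heven]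
    _ = 2 * ∫ x in Set.Ioi (0:ℝ), g x := integral_comp_abs
    _ = 8 * θ := by rw [hIoi, hF0]; ring

/-- **Mass of the DNLS soliton.** For `θ ∈ (0, π/2)`, the soliton profile
`q₀` satisfies `∫ |q₀|² = 8θ`; equivalently
`∫ 2 sin(2θ)/(cos²θ cosh²x + sin²θ sinh²x) dx = 8θ`. -/
theorem stmt_6 (θ : ℝ) (hθ : θ ∈ Set.Ioo 0 (Real.pi / 2)) :
    let q₀ : ℝ → ℂ := fun x =>
      (Real.sqrt (2 * Real.sin (2 * θ)) : ℂ)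
        * ((Real.cos θ : ℂ) * (Real.cosh x : ℂ)
            - Complex.I * (Real.sin θ : ℂ) * (Real.sinh x : ℂ)) ^ 3
        / ((Real.cos θ ^ 2 * Real.cosh x ^ 2 + Real.sin θ ^ 2 * Real.sinh x ^ 2 : ℝ) : ℂ) ^ 2
        * Complex.exp (-(Complex.I * (x : ℂ) * (Real.cot (2 * θ) : ℂ)))
    (∫ x : ℝ, ‖q₀ x‖ ^ 2) = 8 * θ ∧
    (∫ x : ℝ,
        2 * Real.sin (2 * θ)
          / (Real.cos θ ^ 2 * Real.cosh x ^ 2 + Real.sin θ ^ 2 * Real.sinh x ^ 2)) = 8 * θ := by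
  intro q₀
  have hpi := Real.pi_pos
  have hsin2 : 0 < Real.sin (2 * θ) :=
    Real.sin_pos_of_pos_of_lt_pi (by linarith [hθ.1]) (by linarith [hθ.2])
  have hd : ∀ x : ℝ, 0 < Real.cos θ ^ 2 * Real.cosh x ^ 2 + Real.sin θ ^ 2 * Real.sinh x ^ 2 := by
    intro x
    have hc : 0 < Real.cos θ := Real.cos_pos_of_mem_Ioo ⟨by linarith [hθ.1], hθ.2⟩
    nlinarith [mul_pos (pow_pos hc 2) (pow_pos (Real.cosh_pos x) 2),
      sq_nonneg (Real.sin θ * Real.sinh x)]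
  have haux := real_integral_aux θ hθ
  refine ⟨?_, haux⟩
  have hpt : ∀ x : ℝ, ‖q₀ x‖ ^ 2
      = 2 * Real.sin (2 * θ)
          / (Real.cos θ ^ 2 * Real.cosh x ^ 2 + Real.sin θ ^ 2 * Real.sinh x ^ 2) := by
    intro x
    set d : ℝ := Real.cos θ ^ 2 * Real.cosh x ^ 2 + Real.sin θ ^ 2 * Real.sinh x ^ 2 with hdd
    have hd0 := hd x
    have hw : ‖(Real.cos θ : ℂ) * (Real.cosh x : ℂ)
        - Complex.I * (Real.sin θ : ℂ) * (Real.sinh x : ℂ)‖ ^ 2 = d := by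
      rw [Complex.sq_norm, Complex.normSq_apply]
      simp only [Complex.sub_re, Complex.sub_im, Complex.mul_re, Complex.mul_im,
        Complex.I_re, Complex.I_im, Complex.ofReal_re, Complex.ofReal_im, hdd]
      ring
    have habs_exp : ‖Complex.exp (-(Complex.I * (x : ℂ) * (Real.cot (2 * θ) : ℂ)))‖ = 1 := by
      rw [Complex.norm_exp]
      simp only [Complex.neg_re, Complex.mul_re, Complex.mul_im, Complex.I_re, Complex.I_im,
        Complex.ofReal_re, Complex.ofReal_im]
      norm_num
    have : ‖q₀ x‖
        = Real.sqrt (2 * Real.sin (2 * θ))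
            * ‖(Real.cos θ : ℂ) * (Real.cosh x : ℂ)
                - Complex.I * (Real.sin θ : ℂ) * (Real.sinh x : ℂ)‖ ^ 3 / d ^ 2 := by
      simp only [q₀, norm_mul, norm_div, norm_pow, habs_exp, mul_one,
        Complex.norm_real, Real.norm_eq_abs, abs_of_nonneg (Real.sqrt_nonneg _), abs_of_pos hd0, abs_of_pos (show (0:ℝ) < d from hd0), ← hdd]
    rw [this]
    rw [div_pow, mul_pow, ← pow_mul, ← pow_mul]
    have h6 : ‖(Real.cos θ : ℂ) * (Real.cosh x : ℂ)
        - Complex.I * (Real.sin θ : ℂ) * (Real.sinh x : ℂ)‖ ^ (3 * 2) = d ^ 3 := by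
      rw [show 3 * 2 = 2 * 3 by ring, pow_mul, hw]
    rw [h6, Real.sq_sqrt (by linarith : (0:ℝ) ≤ 2 * Real.sin (2 * θ))]
    have hdne : (d:ℝ) ≠ 0 := hd0.ne'
    field_simp
  calc (∫ x : ℝ, ‖q₀ x‖ ^ 2)
      = ∫ x : ℝ, 2 * Real.sin (2 * θ)
          / (Real.cos θ ^ 2 * Real.cosh x ^ 2 + Real.sin θ ^ 2 * Real.sinh x ^ 2) := by
        simp_rw [hpt]
    _ = 8 * θ := haux
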